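/- arXiv:1907.06855 — 8 statements merged into one kernel-verified Lean document; each statement's English description precedes it below -/
import Mathlib

section
/- The sizes of the broadcast redistribution majorize the original sizes: if T_1, ..., T_{d+1} is the broadcast redistribution of finsets v_0, ..., v_d, then for every r ∈ {1,...,d+1} and every subset S ⊆ {0,...,d} with |S| = r, one has Σ_{j∈S} |v_j| ≤ Σ_{u=1}^{r} |T_u|. -/
/-- The sizes of the broadcast redistribution majorize the original
sizes: for every `r ∈ {1, …, d+1}` and every subset `S` of the indices with
`|S| = r`, one has `∑_{j ∈ S} |v j| ≤ ∑_{u=1}^{r} |T u|`. -/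
theorem broadcast_redistribution_majorizes
    {C : Type*} [Fintype C] [DecidableEq C] (d : ℕ)
    (v : Fin (d + 1) → Finset C)
    (n : C → ℕ)
    (hn : ∀ c, n c = (Finset.univ.filter (fun j => c ∈ v j)).card)
    (T : ℕ → Finset C)
    (hT : ∀ u, T u = Finset.univ.filter (fun c => u ≤ n c)) :
    ∀ r, 1 ≤ r → r ≤ d + 1 → ∀ S : Finset (Fin (d + 1)), S.card = r →
      ∑ j ∈ S, (v j).card ≤ ∑ u ∈ Finset.Icc 1 r, (T u).card := by
  intro r hr1 hr2 S hS
  have L : ∑ j ∈ S, (v j).card = ∑ c : C, (S.filter (fun j => c ∈ v j)).card := by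
    simp_rw [Finset.card_filter]
    rw [Finset.sum_comm]
    refine Finset.sum_congr rfl fun j _ => ?_
    have : v j = Finset.univ.filter (fun c => c ∈ v j) := by ext c; simp
    rw [this, Finset.card_filter]
    simp
  have R : ∑ u ∈ Finset.Icc 1 r, (T u).card
      = ∑ c : C, ((Finset.Icc 1 r).filter (fun u => u ≤ n c)).card := by
    simp_rw [hT, Finset.card_filter]
    rw [Finset.sum_comm]
  rw [L, R]
  refine Finset.sum_le_sum fun c _ => ?_
  have h1 : (S.filter (fun j => c ∈ v j)).card ≤ r := hS ▸ Finset.card_filter_le _ _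
  have h2 : (S.filter (fun j => c ∈ v j)).card ≤ n c := by
    rw [hn]
    exact Finset.card_le_card (Finset.filter_subset_filter _ (Finset.subset_univ S))
  have h3 : (Finset.Icc 1 r).filter (fun u => u ≤ n c) = Finset.Icc 1 (min r (n c)) := by
    ext u
    simp only [Finset.mem_filter, Finset.mem_Icc, le_min_iff]
    tauto
  rw [h3, Nat.card_Icc]
  omega
end

section
/- A broadcast interaction does not increase the Lyapunov function V(C) = nK² − Σ_i |v_i|²: if T_1, ..., T_{d+1} is the broadcast redistribution of finsets v_0, ..., v_d, then Σ_{u=1}^{d+1} |T_u|² ≥ Σ_{j=0}^{d} |v_j|². -/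
/-- A broadcast interaction does not increase the Lyapunov function
`V(C) = nK² − ∑ᵢ |vᵢ|²`, i.e. `∑_{u=1}^{d+1} |T u|² ≥ ∑_{j=0}^{d} |v j|²`. -/
theorem broadcast_redistribution_lyapunov_nonincreasing
    {C : Type*} [Fintype C] [DecidableEq C] (d : ℕ)
    (v : Fin (d + 1) → Finset C)
    (n : C → ℕ)
    (hn : ∀ c, n c = (Finset.univ.filter (fun j => c ∈ v j)).card)
    (T : ℕ → Finset C)
    (hT : ∀ u, T u = Finset.univ.filter (fun c => u ≤ n c)) :
    ∑ j : Fin (d + 1), (v j).card ^ 2 ≤ ∑ u ∈ Finset.Icc 1 (d + 1), (T u).card ^ 2 := by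
  have hle : ∀ c, n c ≤ d + 1 := fun c => by
    rw [hn]
    calc (Finset.univ.filter (fun j => c ∈ v j)).card
        ≤ (Finset.univ : Finset (Fin (d+1))).card := Finset.card_filter_le _ _
      _ = d + 1 := by simp
  have key : ∀ (s : Finset C),
      s.card ^ 2 = ∑ c : C, ∑ c' : C, (if c ∈ s ∧ c' ∈ s then 1 else 0) := by
    intro s
    have h1 : s.card = ∑ c : C, (if c ∈ s then 1 else 0) := by
      rw [← Finset.card_filter]
      congr 1
      ext c; simp
    rw [sq, h1, Finset.sum_mul_sum]
    refine Finset.sum_congr rfl fun c _ => Finset.sum_congr rfl fun c' _ => ?_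
    split_ifs <;> simp_all
  calc ∑ j : Fin (d + 1), (v j).card ^ 2
      = ∑ j : Fin (d+1), ∑ c : C, ∑ c' : C, (if c ∈ v j ∧ c' ∈ v j then 1 else 0) :=
        Finset.sum_congr rfl fun j _ => key (v j)
    _ = ∑ c : C, ∑ c' : C, ∑ j : Fin (d+1), (if c ∈ v j ∧ c' ∈ v j then 1 else 0) := by
        rw [Finset.sum_comm]
        exact Finset.sum_congr rfl fun c _ => Finset.sum_comm
    _ ≤ ∑ c : C, ∑ c' : C, min (n c) (n c') := by
        refine Finset.sum_le_sum fun c _ => Finset.sum_le_sum fun c' _ => ?_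
        rw [← Finset.card_filter]
        refine le_min ?_ ?_
        · rw [hn c]
          exact Finset.card_le_card (Finset.filter_subset_filter _
            (fun j hj => hj) |>.trans (by
              apply Finset.monotone_filter_right
              intro j _ hj; exact hj.1))
        · rw [hn c']
          apply Finset.card_le_card
          apply Finset.monotone_filter_right
          intro j _ hj; exact hj.2
    _ = ∑ u ∈ Finset.Icc 1 (d + 1), (T u).card ^ 2 := by
        have hexp : ∀ u ∈ Finset.Icc 1 (d+1), (T u).card ^ 2
            = ∑ c : C, ∑ c' : C, (if u ≤ n c ∧ u ≤ n c' then 1 else 0) := by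
          intro u _
          rw [hT, key]
          refine Finset.sum_congr rfl fun c _ => Finset.sum_congr rfl fun c' _ => ?_
          simp [Finset.mem_filter]
        symm
        calc ∑ u ∈ Finset.Icc 1 (d+1), (T u).card ^ 2
            = ∑ u ∈ Finset.Icc 1 (d+1), ∑ c : C, ∑ c' : C,
                (if u ≤ n c ∧ u ≤ n c' then 1 else 0) := Finset.sum_congr rfl hexp
          _ = ∑ c : C, ∑ c' : C, ∑ u ∈ Finset.Icc 1 (d+1),
                (if u ≤ n c ∧ u ≤ n c' then 1 else 0) := by
              rw [Finset.sum_comm]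
              exact Finset.sum_congr rfl fun c _ => Finset.sum_comm
          _ = ∑ c : C, ∑ c' : C, min (n c) (n c') := ?_
        refine Finset.sum_congr rfl fun c _ => Finset.sum_congr rfl fun c' _ => ?_
        rw [← Finset.card_filter]
        have heq : (Finset.Icc 1 (d+1)).filter (fun u => u ≤ n c ∧ u ≤ n c')
            = Finset.Icc 1 (min (n c) (n c')) := by
          ext u
          have h1 := hle c; have h2 := hle c'
          simp only [Finset.mem_filter, Finset.mem_Icc]
          omega
        rw [heq, Nat.card_Icc]
        omega
end

section
/- A broadcast interaction at a non-stable collection strictly decreases the Lyapunov function: if T_1, ..., T_{d+1} is the broadcast redistribution of finsets v_0, ..., v_d, and there exist indices i, j such that v_i ⊄ v_j and v_j ⊄ v_i (i.e., the original collection is not stable/not a chain under inclusion), then Σ_{u=1}^{d+1} |T_u|² > Σ_{j=0}^{d} |v_j|². -/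
/-- A broadcast interaction at a non-stable collection strictly
decreases the Lyapunov function: if some two of the original value sets are
incomparable under inclusion, then `∑_{u=1}^{d+1} |T u|² > ∑_{j=0}^{d} |v j|²`. -/
theorem broadcast_redistribution_lyapunov_strict_decrease
    {C : Type*} [Fintype C] [DecidableEq C] (d : ℕ)
    (v : Fin (d + 1) → Finset C)
    (n : C → ℕ)
    (hn : ∀ c, n c = (Finset.univ.filter (fun j => c ∈ v j)).card)
    (T : ℕ → Finset C)
    (hT : ∀ u, T u = Finset.univ.filter (fun c => u ≤ n c))
    (hunstable : ∃ i j : Fin (d + 1), ¬ v i ⊆ v j ∧ ¬ v j ⊆ v i) :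
    ∑ j : Fin (d + 1), (v j).card ^ 2 < ∑ u ∈ Finset.Icc 1 (d + 1), (T u).card ^ 2 := by
  classical
  obtain ⟨i, j, hij, hji⟩ := hunstable
  obtain ⟨c₀, hc₀i, hc₀j⟩ := Finset.not_subset.mp hij
  obtain ⟨c₁, hc₁j, hc₁i⟩ := Finset.not_subset.mp hji
  set B : C → C → ℕ := fun c c' =>
    (Finset.univ.filter (fun k : Fin (d + 1) => c ∈ v k ∧ c' ∈ v k)).card with hB
  have hnle : ∀ c, n c ≤ d + 1 := by
    intro c
    rw [hn]
    exact (Finset.card_filter_le _ _).trans (by simp)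
  have hL : ∑ j : Fin (d + 1), (v j).card ^ 2 = ∑ c : C, ∑ c' : C, B c c' := by
    have : ∀ k : Fin (d + 1), (v k).card ^ 2
        = ∑ c : C, ∑ c' : C, (if c ∈ v k ∧ c' ∈ v k then 1 else 0) := by
      intro k
      rw [pow_two]
      have h1 : (v k).card = ∑ c : C, (if c ∈ v k then 1 else 0) := by
        simp [Finset.card_filter, Finset.filter_mem_eq_inter]
      rw [h1, Finset.sum_mul_sum]
      refine Finset.sum_congr rfl fun c _ => Finset.sum_congr rfl fun c' _ => ?_
      by_cases h : c ∈ v k <;> by_cases h' : c' ∈ v k <;> simp [h, h']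
    simp only [this, hB, Finset.card_filter]
    rw [Finset.sum_comm]
    refine Finset.sum_congr rfl fun c _ => Finset.sum_comm
  have hR : ∑ u ∈ Finset.Icc 1 (d + 1), (T u).card ^ 2
      = ∑ c : C, ∑ c' : C, min (n c) (n c') := by
    have : ∀ u, (T u).card ^ 2
        = ∑ c : C, ∑ c' : C, (if u ≤ n c ∧ u ≤ n c' then 1 else 0) := by
      intro u
      rw [pow_two, hT]
      have h1 : (Finset.univ.filter (fun c => u ≤ n c)).card
          = ∑ c : C, (if u ≤ n c then 1 else 0) := Finset.card_filter _ _
      rw [h1, Finset.sum_mul_sum]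
      refine Finset.sum_congr rfl fun c _ => Finset.sum_congr rfl fun c' _ => ?_
      by_cases h : u ≤ n c <;> by_cases h' : u ≤ n c' <;> simp [h, h']
    simp only [this]
    rw [Finset.sum_comm]
    refine Finset.sum_congr rfl fun c _ => ?_
    rw [Finset.sum_comm]
    refine Finset.sum_congr rfl fun c' _ => ?_
    have : ∑ u ∈ Finset.Icc 1 (d + 1), (if u ≤ n c ∧ u ≤ n c' then 1 else 0)
        = ((Finset.Icc 1 (d + 1)).filter (fun u => u ≤ n c ∧ u ≤ n c')).card :=
      (Finset.card_filter _ _).symm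
    rw [this]
    have hfe : (Finset.Icc 1 (d + 1)).filter (fun u => u ≤ n c ∧ u ≤ n c')
        = Finset.Icc 1 (min (n c) (n c')) := by
      ext u
      simp only [Finset.mem_filter, Finset.mem_Icc, le_min_iff]
      constructor
      · rintro ⟨⟨h1, _⟩, h2, h3⟩; exact ⟨h1, h2, h3⟩
      · rintro ⟨h1, h2, h3⟩
        exact ⟨⟨h1, h2.trans (hnle c)⟩, h2, h3⟩
    rw [hfe, Nat.card_Icc]
    omega
  rw [hL, hR]
  have key : ∀ c c', B c c' ≤ min (n c) (n c') := by
    intro c c'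
    refine le_min ?_ ?_
    · rw [hn]
      exact Finset.card_le_card (Finset.monotone_filter_right _ fun k _ hk => hk.1)
    · rw [hn]
      exact Finset.card_le_card (Finset.monotone_filter_right _ fun k _ hk => hk.2)
  refine Finset.sum_lt_sum (fun c _ => Finset.sum_le_sum fun c' _ => key c c')
    ⟨c₀, Finset.mem_univ _, Finset.sum_lt_sum (fun c' _ => key c₀ c')
      ⟨c₁, Finset.mem_univ _, ?_⟩⟩
  refine lt_min ?_ ?_
  · rw [hn]
    refine Finset.card_lt_card ⟨Finset.monotone_filter_right _ fun k _ hk => hk.1,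
      fun hsub => ?_⟩
    have := hsub (Finset.mem_filter.mpr ⟨Finset.mem_univ i, hc₀i⟩)
    exact hc₁i (Finset.mem_filter.mp this).2.2
  · rw [hn]
    refine Finset.card_lt_card ⟨Finset.monotone_filter_right _ fun k _ hk => hk.2,
      fun hsub => ?_⟩
    have := hsub (Finset.mem_filter.mpr ⟨Finset.mem_univ j, hc₁j⟩)
    exact hc₀j (Finset.mem_filter.mp this).2.1
end

section
/- In a stable configuration the singleton value sets all carry the majority choice: let S_1, ..., S_N be finsets over a choice type C that are pairwise comparable under inclusion (a stable collection), and for each choice c let count(c) = |{j : c ∈ S_j}|. Suppose there is a choice c* with count(c*) ≥ 1 and count(c) < count(c*) for every choice c ≠ c*. Then (i) there exists an index j with S_j = {c*}, and (ii) for every index j, if |S_j| = 1 then S_j = {c*}. -/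
/-- In a stable (pairwise inclusion-comparable) collection
`S 0, …, S (N-1)` of finsets, if the choice `c*` has count at least one and a
strictly larger count than every other choice, then some member equals `{c*}`
and every member of size one equals `{c*}`. -/
theorem stable_singletons_are_majority
    {C : Type*} [DecidableEq C] (N : ℕ)
    (S : Fin N → Finset C)
    (hchain : ∀ i j : Fin N, S i ⊆ S j ∨ S j ⊆ S i)
    (count : C → ℕ)
    (hcount : ∀ c, count c = (Finset.univ.filter (fun j => c ∈ S j)).card)
    (cstar : C)
    (hpos : 1 ≤ count cstar)
    (hmaj : ∀ c : C, c ≠ cstar → count c < count cstar) :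
    (∃ j : Fin N, S j = {cstar}) ∧
    (∀ j : Fin N, (S j).card = 1 → S j = {cstar}) := by
  classical
  set T := Finset.univ.filter (fun j => cstar ∈ S j) with hT
  have hTne : T.Nonempty := by
    rw [← Finset.card_pos, hT, ← hcount]; omega
  obtain ⟨j0, hj0T, hj0min⟩ := T.exists_min_image (fun j => (S j).card) hTne
  have hj0c : cstar ∈ S j0 := by
    simpa [hT] using hj0T
  -- every set containing cstar contains S j0
  have hsub : ∀ j : Fin N, cstar ∈ S j → S j0 ⊆ S j := by
    intro j hj
    rcases hchain j0 j with h | h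
    · exact h
    · have hjT : j ∈ T := by simpa [hT] using hj
      have hle := hj0min j hjT
      have := Finset.card_le_card h
      have : S j = S j0 := Finset.eq_of_subset_of_card_le h (by omega)
      rw [this]
  have hsing : S j0 = {cstar} := by
    apply Finset.eq_singleton_iff_unique_mem.mpr
    refine ⟨hj0c, fun d hd => ?_⟩
    by_contra hdne
    have hlt := hmaj d hdne
    have hle : count cstar ≤ count d := by
      rw [hcount, hcount]
      apply Finset.card_le_card
      intro j hj
      simp only [Finset.mem_filter, Finset.mem_univ, true_and] at hj ⊢
      exact hsub j hj hd
    omega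
  refine ⟨⟨j0, hsing⟩, fun j hcard => ?_⟩
  obtain ⟨d, hd⟩ := Finset.card_eq_one.mp hcard
  rcases hchain j j0 with h | h
  · rw [hd, hsing] at h
    have := h (Finset.mem_singleton_self d)
    rw [hd, Finset.mem_singleton.mp this]
  · rw [hd, hsing] at h
    have := Finset.mem_singleton.mp (h (Finset.mem_singleton_self cstar))
    rw [hd, ← this]
end

section
/- Uniqueness of the stable rearrangement: let S_0, ..., S_d be finsets over a choice type C that are pairwise comparable under inclusion, and for each choice c let n_c = |{j ∈ {0,...,d} : c ∈ S_j}|. Let T_1, ..., T_{d+1} with T_u = {c : n_c ≥ u} be the broadcast redistribution determined by these counts. Then the multiset {S_0, ..., S_d} equals the multiset {T_1, ..., T_{d+1}}. (This underlies the claim in the proof of Theorem 1 that the broadcast result C' is a permutation of the configuration C_r obtained by iterating pairwise DMVR interactions until stability.) -/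
lemma perm_map_univ {α : Type*} {m : ℕ} (e : Equiv.Perm (Fin m)) (f : Fin m → α) :
    Finset.univ.val.map (fun k => f (e k)) = Finset.univ.val.map f := by
  have h : (Finset.univ.map e.toEmbedding).val = Finset.univ.val := by
    rw [Finset.map_univ_equiv]
  calc Finset.univ.val.map (fun k => f (e k))
      = (Finset.univ.val.map ⇑e).map f := by
        rw [Multiset.map_map]; rfl
    _ = Finset.univ.val.map f := by
        rw [show Finset.univ.val.map ⇑e = Finset.univ.val from h]

def succEmb (d : ℕ) : Fin (d + 1) ↪ ℕ :=
  ⟨fun k => k.val + 1, fun a b h => Fin.ext (by simpa using h)⟩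

/-- Uniqueness of the stable rearrangement: if `S 0, …, S d` are
pairwise comparable under inclusion and `T u = {c : n c ≥ u}` is the broadcast
redistribution determined by their counts `n c`, then the multiset
`{S 0, …, S d}` equals the multiset `{T 1, …, T (d+1)}`. -/
theorem stable_rearrangement_unique
    {C : Type*} [Fintype C] [DecidableEq C] (d : ℕ)
    (S : Fin (d + 1) → Finset C)
    (hchain : ∀ i j : Fin (d + 1), S i ⊆ S j ∨ S j ⊆ S i)
    (n : C → ℕ)
    (hn : ∀ c, n c = (Finset.univ.filter (fun j => c ∈ S j)).card)
    (T : ℕ → Finset C)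
    (hT : ∀ u, T u = Finset.univ.filter (fun c => u ≤ n c)) :
    (Finset.univ.val.map (fun j : Fin (d + 1) => S j)) =
      ((Finset.Icc 1 (d + 1)).val.map T) := by
  classical
  set σ := Tuple.sort (fun k => (S k).card) with hσ
  have hmono : Monotone ((fun k => (S k).card) ∘ σ) := Tuple.monotone_sort _
  have hsub : ∀ j k : Fin (d+1), j ≤ k → S (σ j) ⊆ S (σ k) := by
    intro j k hjk
    rcases hchain (σ j) (σ k) with h | h
    · exact h
    · have hc : (S (σ j)).card ≤ (S (σ k)).card := hmono hjk
      exact le_of_eq (Finset.eq_of_subset_of_card_le h hc).symm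
  have key : ∀ k : Fin (d+1), S (σ k) = T (d + 1 - k.val) := by
    intro k
    ext c
    rw [hT]
    simp only [Finset.mem_filter, Finset.mem_univ, true_and]
    set A := Finset.univ.filter (fun k' : Fin (d+1) => c ∈ S (σ k')) with hA
    have hup : ∀ {j k' : Fin (d+1)}, j ∈ A → j ≤ k' → k' ∈ A := by
      intro j k' hj hjk
      simp only [hA, Finset.mem_filter, Finset.mem_univ, true_and] at hj ⊢
      exact hsub j k' hjk hj
    have hAcard : A.card = n c := by
      rw [hn]
      apply Finset.card_bij (fun k' _ => σ k')
      · intro a ha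
        simp only [hA, Finset.mem_filter, Finset.mem_univ, true_and] at ha
        simpa using ha
      · intro a _ b _ hab
        exact σ.injective hab
      · intro b hb
        refine ⟨σ.symm b, ?_, by simp⟩
        simp only [hA, Finset.mem_filter, Finset.mem_univ, true_and,
          Equiv.apply_symm_apply]
        simpa using hb
    constructor
    · intro hc
      have hkA : k ∈ A := by
        simp [hA, hc]
      have h1 : Finset.Ici k ⊆ A := fun k' hk' => hup hkA (Finset.mem_Ici.mp hk')
      have h2 := Finset.card_le_card h1
      rw [Fin.card_Ici] at h2
      omega
    · intro hnc
      by_contra hc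
      have h1 : A ⊆ Finset.Ioi k := by
        intro k' hk'
        rw [Finset.mem_Ioi]
        by_contra hlt
        push_neg at hlt
        apply hc
        have := hup hk' hlt
        simpa [hA] using this
      have h2 := Finset.card_le_card h1
      rw [Fin.card_Ioi] at h2
      have hk := k.isLt
      omega
  have hIcc : Finset.univ.map (succEmb d) = Finset.Icc 1 (d + 1) := by
    ext m
    simp only [Finset.mem_map, Finset.mem_univ, true_and, Finset.mem_Icc, succEmb,
      Function.Embedding.coeFn_mk]
    constructor
    · rintro ⟨a, rfl⟩
      have := a.isLt
      show 1 ≤ a.val + 1 ∧ a.val + 1 ≤ d + 1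
      omega
    · intro hm
      exact ⟨⟨m - 1, by omega⟩, by show m - 1 + 1 = m; omega⟩
  calc Finset.univ.val.map (fun j : Fin (d + 1) => S j)
      = Finset.univ.val.map (fun k => S (σ k)) := (perm_map_univ σ S).symm
    _ = Finset.univ.val.map (fun k : Fin (d+1) => T (d + 1 - k.val)) := by
        apply Multiset.map_congr rfl
        intro k _
        exact key k
    _ = Finset.univ.val.map (fun k : Fin (d+1) => T (d + 1 - (Fin.revPerm k).val)) :=
        (perm_map_univ Fin.revPerm (fun k : Fin (d+1) => T (d + 1 - k.val))).symm
    _ = Finset.univ.val.map (fun k : Fin (d+1) => T (k.val + 1)) := by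
        apply Multiset.map_congr rfl
        intro k _
        congr 1
        have hk := k.isLt
        simp only [Fin.revPerm_apply, Fin.val_rev]
        omega
    _ = (Finset.Icc 1 (d + 1)).val.map T := by
        rw [← hIcc, Finset.map_val, Multiset.map_map]
        apply Multiset.map_congr rfl
        intro k _
        rfl
end

section
/- Explicit solution of the mean-field ODE for the first phase: let a > 0 and 0 < x₀ < y₀ be real numbers, set Δ = y₀ − x₀, and define x : ℝ → ℝ by x(t) = Δ / ((y₀/x₀)·exp(a·Δ·t) − 1). Then x(0) = x₀, and for every t ≥ 0 the function x has derivative x'(t) = −a · x(t) · (x(t) + Δ) at t (i.e., x solves dx/dt = −a·x·(x + y₀ − x₀)). -/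
/-- Explicit solution of the mean-field ODE of the first phase:
`x t = (y₀ − x₀) / ((y₀/x₀)·exp(a(y₀−x₀)t) − 1)` satisfies `x 0 = x₀` and solves
`dx/dt = −a·x·(x + y₀ − x₀)` at every `t ≥ 0`. -/
theorem first_phase_ode_solution
    (a x₀ y₀ : ℝ) (ha : 0 < a) (hx₀ : 0 < x₀) (hxy : x₀ < y₀)
    (x : ℝ → ℝ)
    (hx : ∀ t : ℝ, x t =
      (y₀ - x₀) / ((y₀ / x₀) * Real.exp (a * (y₀ - x₀) * t) - 1)) :
    x 0 = x₀ ∧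
    ∀ t : ℝ, 0 ≤ t → HasDerivAt x (-a * x t * (x t + (y₀ - x₀))) t := by
  have hΔ : 0 < y₀ - x₀ := by linarith
  have hr : 1 < y₀ / x₀ := (one_lt_div hx₀).2 hxy
  have hD : ∀ t : ℝ, 0 ≤ t → 0 < (y₀ / x₀) * Real.exp (a * (y₀ - x₀) * t) - 1 := by
    intro t ht
    have h1 : (1:ℝ) ≤ Real.exp (a * (y₀ - x₀) * t) :=
      Real.one_le_exp (by positivity)
    nlinarith
  constructor
  · rw [hx 0]
    simp only [mul_zero, Real.exp_zero, mul_one]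
    rw [div_eq_iff (by linarith [hD 0 le_rfl] : (y₀ / x₀) - 1 ≠ 0)]
    field_simp
  · intro t ht
    have hfun : x = fun s => (y₀ - x₀) / ((y₀ / x₀) * Real.exp (a * (y₀ - x₀) * s) - 1) := by
      funext s; exact hx s
    have hDt := hD t ht
    have hDne : (y₀ / x₀) * Real.exp (a * (y₀ - x₀) * t) - 1 ≠ 0 := ne_of_gt hDt
    -- derivative of the denominator
    have hd : HasDerivAt (fun s => (y₀ / x₀) * Real.exp (a * (y₀ - x₀) * s) - 1)
        ((y₀ / x₀) * (Real.exp (a * (y₀ - x₀) * t) * (a * (y₀ - x₀)))) t := by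
      have h1 : HasDerivAt (fun s : ℝ => a * (y₀ - x₀) * s) (a * (y₀ - x₀)) t := by
        simpa using (hasDerivAt_id t).const_mul (a * (y₀ - x₀))
      have h2 := (Real.hasDerivAt_exp (a * (y₀ - x₀) * t)).comp t h1
      exact ((h2.const_mul (y₀ / x₀)).sub_const 1)
    have hder : HasDerivAt (fun s => (y₀ - x₀) / ((y₀ / x₀) * Real.exp (a * (y₀ - x₀) * s) - 1)) _ t :=
      (hasDerivAt_const t (y₀ - x₀)).div hd hDne
    rw [hfun]
    convert hder using 1
    beta_reduce
    set E := Real.exp (a * (y₀ - x₀) * t) with hE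
    have hne : y₀ * E - x₀ ≠ 0 := by
      intro h
      apply hDne
      field_simp
      linarith
    field_simp
    ring
end

section
/- First-phase time bound (equation (13)): let n > 0, d > 0 and 0 < ρ₁ < ρ₂ be real numbers, set a = d(d+1)/n², x₀ = n·ρ₁, y₀ = n·ρ₂, Δ = n·(ρ₂ − ρ₁), and define x(t) = Δ / ((ρ₂/ρ₁)·exp(a·Δ·t) − 1). Then for every t ≥ 0 with t ≥ (n / (d(d+1)(ρ₂ − ρ₁))) · ( ln(ρ₁/ρ₂) + ln(n(ρ₂ − ρ₁) + 1) ), one has x(t) ≤ 1. -/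
/-- First-phase time bound (equation (13)): with
`x t = n(ρ₂−ρ₁) / ((ρ₂/ρ₁)·exp((d(d+1)/n²)·n(ρ₂−ρ₁)·t) − 1)`, for every `t ≥ 0`
beyond `n/(d(d+1)(ρ₂−ρ₁)) · (ln(ρ₁/ρ₂) + ln(n(ρ₂−ρ₁)+1))` one has `x t ≤ 1`. -/
theorem first_phase_time_bound
    (n d ρ₁ ρ₂ : ℝ) (hn : 0 < n) (hd : 0 < d) (hρ₁ : 0 < ρ₁) (hρ : ρ₁ < ρ₂)
    (x : ℝ → ℝ)
    (hx : ∀ t : ℝ, x t =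
      n * (ρ₂ - ρ₁) /
        ((ρ₂ / ρ₁) * Real.exp ((d * (d + 1) / n ^ 2) * (n * (ρ₂ - ρ₁)) * t) - 1)) :
    ∀ t : ℝ, 0 ≤ t →
      (n / (d * (d + 1) * (ρ₂ - ρ₁))) *
          (Real.log (ρ₁ / ρ₂) + Real.log (n * (ρ₂ - ρ₁) + 1)) ≤ t →
      x t ≤ 1 := by
  intro t ht ht0
  have hΔ : 0 < n * (ρ₂ - ρ₁) := mul_pos hn (by linarith)
  have hρ₂ : 0 < ρ₂ := lt_trans hρ₁ hρ
  have hk : 0 < d * (d + 1) / n ^ 2 * (n * (ρ₂ - ρ₁)) :=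
    mul_pos (div_pos (mul_pos hd (by linarith)) (by positivity)) hΔ
  set k := d * (d + 1) / n ^ 2 * (n * (ρ₂ - ρ₁)) with hkdef
  set L := Real.log (ρ₁ / ρ₂) + Real.log (n * (ρ₂ - ρ₁) + 1) with hLdef
  have hL : L ≤ k * t := by
    have heq : n / (d * (d + 1) * (ρ₂ - ρ₁)) * k = 1 := by
      have h1 : d + 1 ≠ 0 := by linarith
      have h2 : ρ₂ - ρ₁ ≠ 0 := by linarith
      rw [hkdef]
      field_simp
    have h2 := mul_le_mul_of_nonneg_left ht0 hk.le
    calc L = k * (n / (d * (d + 1) * (ρ₂ - ρ₁)) * L) := by rw [← mul_assoc, mul_comm k, heq, one_mul]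
      _ ≤ k * t := by nlinarith
  have hexp : (ρ₁ / ρ₂) * (n * (ρ₂ - ρ₁) + 1) ≤ Real.exp (k * t) := by
    calc (ρ₁ / ρ₂) * (n * (ρ₂ - ρ₁) + 1)
        = Real.exp L := by
          rw [hLdef, Real.exp_add, Real.exp_log (by positivity), Real.exp_log (by linarith)]
      _ ≤ Real.exp (k * t) := Real.exp_le_exp.mpr hL
  have hdenom : n * (ρ₂ - ρ₁) ≤ (ρ₂ / ρ₁) * Real.exp (k * t) - 1 := by
    have h1 : (ρ₂ / ρ₁) * ((ρ₁ / ρ₂) * (n * (ρ₂ - ρ₁) + 1)) = n * (ρ₂ - ρ₁) + 1 := by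
      field_simp
    nlinarith [mul_le_mul_of_nonneg_left hexp (le_of_lt (div_pos hρ₂ hρ₁))]
  rw [hx t]
  rw [div_le_one (by linarith)]
  linarith
end

section
/- Two-sided bound justifying the binomial-expansion approximation (equations (9)–(10)): for every natural number m ≥ 1 and all real numbers a, b with 0 ≤ a, 0 ≤ b and a + b ≤ 1, one has 1 − m(m−1)·a·b ≤ (1 − a)^m + (1 − b)^m − (1 − a − b)^m ≤ 1. -/
lemma aux_pow_sub_pow_le (x y : ℝ) (hy : 0 ≤ y) (hyx : y ≤ x) (hx : x ≤ 1) (m : ℕ) :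
    x ^ m - y ^ m ≤ m * (x - y) := by
  rw [← geom_sum₂_mul]
  have hx0 : 0 ≤ x := hy.trans hyx
  have hsum : (∑ i ∈ Finset.range m, x ^ i * y ^ (m - 1 - i)) ≤ m := by
    calc (∑ i ∈ Finset.range m, x ^ i * y ^ (m - 1 - i))
        ≤ ∑ _i ∈ Finset.range m, (1 : ℝ) := by
          apply Finset.sum_le_sum
          intro i _
          exact mul_le_one₀ (pow_le_one₀ hx0 hx) (pow_nonneg hy _)
            (pow_le_one₀ hy (hyx.trans hx))
      _ = m := by simp
  exact mul_le_mul_of_nonneg_right hsum (sub_nonneg.2 hyx)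

/-- Two-sided bound justifying the binomial-expansion approximation
(equations (9)–(10)): for `m ≥ 1` and `0 ≤ a`, `0 ≤ b`, `a + b ≤ 1`,
`1 − m(m−1)ab ≤ (1−a)^m + (1−b)^m − (1−a−b)^m ≤ 1`. -/
theorem binomial_expansion_two_sided_bound
    (m : ℕ) (hm : 1 ≤ m) (a b : ℝ) (ha : 0 ≤ a) (hb : 0 ≤ b) (hab : a + b ≤ 1) :
    1 - (m : ℝ) * ((m : ℝ) - 1) * a * b ≤
      (1 - a) ^ m + (1 - b) ^ m - (1 - a - b) ^ m ∧
    (1 - a) ^ m + (1 - b) ^ m - (1 - a - b) ^ m ≤ 1 := by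
  have hc : (0:ℝ) ≤ 1 - a - b := by linarith
  have h1a : 1 - a - b ≤ 1 - a := by linarith
  have h1a1 : 1 - a ≤ 1 := by linarith
  have h1b : 1 - a - b ≤ 1 - b := by linarith
  have h1b1 : 1 - b ≤ 1 := by linarith
  induction m, hm using Nat.le_induction with
  | base => norm_num
  | succ m hm ih =>
    obtain ⟨ihl, ihr⟩ := ih
    have ka := aux_pow_sub_pow_le (1 - a) (1 - a - b) hc h1a h1a1 m
    have kb := aux_pow_sub_pow_le (1 - b) (1 - a - b) hc h1b h1b1 m
    have pa : (1 - a - b) ^ m ≤ (1 - a) ^ m := pow_le_pow_left₀ hc h1a m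
    have pb : (1 - a - b) ^ m ≤ (1 - b) ^ m := pow_le_pow_left₀ hc h1b m
    have hm0 : (0:ℝ) ≤ m := Nat.cast_nonneg m
    have expand : (1 - a) ^ (m + 1) + (1 - b) ^ (m + 1) - (1 - a - b) ^ (m + 1)
        = ((1 - a) ^ m + (1 - b) ^ m - (1 - a - b) ^ m)
          - (a * ((1 - a) ^ m - (1 - a - b) ^ m) + b * ((1 - b) ^ m - (1 - a - b) ^ m)) := by
      ring
    constructor
    · push_cast
      rw [expand]
      have hDa : a * ((1 - a) ^ m - (1 - a - b) ^ m) ≤ a * (m * b) := by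
        have := aux_pow_sub_pow_le (1 - a) (1 - a - b) hc h1a h1a1 m
        have h : (1 - a) - (1 - a - b) = b := by ring
        nlinarith
      have hDb : b * ((1 - b) ^ m - (1 - a - b) ^ m) ≤ b * (m * a) := by
        nlinarith
      nlinarith
    · rw [expand]
      nlinarith
end
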